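/- arXiv:2011.00050 — 5 statements merged into one kernel-verified Lean document; each statement's English description precedes it below -/
import Mathlib

section
/- Fix integers d ≥ 1, C ≥ 1, n ≥ C and a real number λ > 0. For every matrix w ∈ ℝ^{d×C} there exist X ∈ ℝ^{n×d} and y ∈ ℝ^{n×C} such that the matrix XXᵀ + λI ∈ ℝ^{n×n} is invertible and Xᵀ(XXᵀ + λI)⁻¹ y = w. In other words, every linear ridge-regression coefficient matrix in ℝ^{d×C} is realized by some dataset of size n ≥ C. -/
open Matrix

/-- Every linear ridge-regression coefficient matrix `w ∈ ℝ^{d×C}` is realized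
as `Xᵀ(XXᵀ + λI)⁻¹ y` by some dataset `(X, y)` of size `n ≥ C`. -/
theorem ridge_regression_realizes_every_coefficient_matrix
    (d C n : ℕ) (hd : 1 ≤ d) (hC : 1 ≤ C) (hn : C ≤ n)
    (lam : ℝ) (hlam : 0 < lam) (w : Matrix (Fin d) (Fin C) ℝ) :
    ∃ (X : Matrix (Fin n) (Fin d) ℝ) (y : Matrix (Fin n) (Fin C) ℝ),
      IsUnit (X * Xᵀ + lam • (1 : Matrix (Fin n) (Fin n) ℝ)) ∧
      Xᵀ * (X * Xᵀ + lam • (1 : Matrix (Fin n) (Fin n) ℝ))⁻¹ * y = w := by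
  set X : Matrix (Fin n) (Fin d) ℝ :=
    fun i j => if h : (i : ℕ) < C then w j ⟨i, h⟩ else 0 with hX
  set M : Matrix (Fin n) (Fin n) ℝ := X * Xᵀ + lam • (1 : Matrix (Fin n) (Fin n) ℝ) with hM
  set z : Matrix (Fin n) (Fin C) ℝ := fun i k => if (i : ℕ) = (k : ℕ) then 1 else 0 with hz
  have hPD : M.PosDef := by
    apply Matrix.PosDef.posSemidef_add
    · simpa using Matrix.posSemidef_self_mul_conjTranspose X
    · rw [Matrix.smul_one_eq_diagonal]
      exact Matrix.PosDef.diagonal fun _ => hlam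
  have hUnit : IsUnit M := hPD.isUnit
  refine ⟨X, M * z, hUnit, ?_⟩
  have hinv : M⁻¹ * M = 1 := Matrix.nonsing_inv_mul M ((Matrix.isUnit_iff_isUnit_det M).mp hUnit)
  rw [Matrix.mul_assoc, ← Matrix.mul_assoc M⁻¹ M z, hinv, Matrix.one_mul]
  ext j k
  have hk : (k : ℕ) < n := lt_of_lt_of_le k.isLt hn
  rw [Matrix.mul_apply]
  rw [Finset.sum_eq_single ⟨(k : ℕ), hk⟩]
  · simp [hz, hX, Matrix.transpose_apply, Fin.eta]
    exact dif_pos k.isLt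
  · intro b _ hb
    have : (b : ℕ) ≠ (k : ℕ) := fun h => hb (Fin.ext h)
    simp [hz, this]
  · simp
end

section
/- Fix λ > 0 and integers n, d ≥ 1. The image of the map X ↦ Φ_λ(X) = Xᵀ(XXᵀ + λI)⁻¹ over all X ∈ ℝ^{n×d} is exactly the set of matrices Φ ∈ ℝ^{d×n} whose ℓ²→ℓ² operator norm is at most 1/(2√λ), i.e. {Φ ∈ ℝ^{d×n} : ∀ v ∈ ℝ^n, ‖Φv‖ ≤ ‖v‖/(2√λ)}. -/
open Matrix

private lemma ridge_norm_eq {k : ℕ} (x : Fin k → ℝ) :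
    ‖(EuclideanSpace.equiv (Fin k) ℝ).symm x‖ = Real.sqrt (x ⬝ᵥ x) := by
  rw [EuclideanSpace.norm_eq]
  congr 1
  simp [dotProduct, Real.norm_eq_abs, sq_abs, sq]

private lemma ridge_posdef {n d : ℕ} {lam : ℝ} (hlam : 0 < lam)
    (X : Matrix (Fin n) (Fin d) ℝ) :
    (X * Xᵀ + lam • (1 : Matrix (Fin n) (Fin n) ℝ)).PosDef := by
  have h1 : (X * Xᵀ).PosSemidef := by
    simpa [conjTranspose_eq_transpose_of_trivial] using
      Matrix.posSemidef_self_mul_conjTranspose X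
  have h2 : (lam • (1 : Matrix (Fin n) (Fin n) ℝ)).PosDef := by
    rw [smul_one_eq_diagonal]
    exact Matrix.posDef_diagonal_iff.mpr fun i => hlam
  exact Matrix.PosDef.posSemidef_add h1 h2

private lemma ridge_sqrt_le {lam a b : ℝ} (hlam : 0 < lam) (ha : 0 ≤ a)
    (h : 4 * lam * a ≤ b) :
    Real.sqrt a ≤ Real.sqrt b / (2 * Real.sqrt lam) := by
  rw [le_div_iff₀ (by positivity)]
  have h4 : Real.sqrt a * (2 * Real.sqrt lam) = Real.sqrt (4 * lam * a) := by
    rw [show (4:ℝ) * lam * a = a * ((2 * Real.sqrt lam) ^ 2) by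
          rw [mul_pow, Real.sq_sqrt hlam.le]; ring,
        Real.sqrt_mul ha, Real.sqrt_sq (by positivity)]
  rw [h4]
  exact Real.sqrt_le_sqrt h

private lemma ridge_forward {n d : ℕ} {lam : ℝ} (hlam : 0 < lam)
    (X : Matrix (Fin n) (Fin d) ℝ) (vf : Fin n → ℝ) :
    4 * lam * (((Xᵀ * (X * Xᵀ + lam • (1 : Matrix (Fin n) (Fin n) ℝ))⁻¹) *ᵥ vf) ⬝ᵥ
      ((Xᵀ * (X * Xᵀ + lam • (1 : Matrix (Fin n) (Fin n) ℝ))⁻¹) *ᵥ vf)) ≤ vf ⬝ᵥ vf := by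
  have hC := ridge_posdef hlam X
  set C := X * Xᵀ + lam • (1 : Matrix (Fin n) (Fin n) ℝ) with hCdef
  set w := C⁻¹ *ᵥ vf with hw
  have hCv : C *ᵥ w = vf := by
    rw [hw, mulVec_mulVec, Matrix.mul_nonsing_inv _ ((Matrix.isUnit_iff_isUnit_det _).mp hC.isUnit),
      one_mulVec]
  set u := Xᵀ *ᵥ w with hu
  set a := (X * Xᵀ) *ᵥ w with ha
  have h1 : (Xᵀ * C⁻¹) *ᵥ vf = u := by rw [← mulVec_mulVec, ← hw, hu]
  have h2 : a ⬝ᵥ w = u ⬝ᵥ u := by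
    rw [ha, ← mulVec_mulVec, dotProduct_comm, dotProduct_mulVec, ← mulVec_transpose]
  have h3 : vf = a + lam • w := by
    rw [← hCv, hCdef, add_mulVec, smul_mulVec, one_mulVec, ha]
  have key : 4 * lam * (a ⬝ᵥ w) ≤ vf ⬝ᵥ vf := by
    have hnn : 0 ≤ (a - lam • w) ⬝ᵥ (a - lam • w) :=
      Finset.sum_nonneg fun i _ => mul_self_nonneg _
    have e1 : (a - lam • w) ⬝ᵥ (a - lam • w)
        = a ⬝ᵥ a - 2 * lam * (a ⬝ᵥ w) + lam ^ 2 * (w ⬝ᵥ w) := by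
      simp [sub_dotProduct, dotProduct_sub, smul_dotProduct, dotProduct_smul,
        dotProduct_comm w a, smul_eq_mul]
      ring
    have e2 : vf ⬝ᵥ vf = a ⬝ᵥ a + 2 * lam * (a ⬝ᵥ w) + lam ^ 2 * (w ⬝ᵥ w) := by
      rw [h3]
      simp [add_dotProduct, dotProduct_add, smul_dotProduct, dotProduct_smul,
        dotProduct_comm w a, smul_eq_mul]
      ring
    rw [e2]; rw [e1] at hnn; linarith
  rw [h1, ← h2]; exact key

private lemma ridge_scalar {lam t : ℝ} (hlam : 0 < lam) (ht : 4 * lam * t ≤ 1) :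
    (2 * lam / (1 + Real.sqrt (1 - 4 * lam * t))) ^ 2 * t + lam
      = 2 * lam / (1 + Real.sqrt (1 - 4 * lam * t)) := by
  set r := Real.sqrt (1 - 4 * lam * t) with hrdef
  have hr0 : 0 ≤ r := Real.sqrt_nonneg _
  have hr : r ^ 2 = 1 - 4 * lam * t := Real.sq_sqrt (by linarith)
  have h1r : 0 < 1 + r := by linarith
  field_simp
  linear_combination hr

/-- The image of the map `X ↦ Φ_λ(X) = Xᵀ(XXᵀ + λI)⁻¹` over all
`X ∈ ℝ^{n×d}` is exactly the set of `d×n` matrices of ℓ²→ℓ² operator norm at most `1/(2√λ)`. -/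
theorem ridge_operator_image_eq_opNorm_ball
    (n d : ℕ) (hn : 1 ≤ n) (hd : 1 ≤ d) (lam : ℝ) (hlam : 0 < lam) :
    {Φ : Matrix (Fin d) (Fin n) ℝ | ∃ X : Matrix (Fin n) (Fin d) ℝ,
        Φ = Xᵀ * (X * Xᵀ + lam • (1 : Matrix (Fin n) (Fin n) ℝ))⁻¹} =
    {Φ : Matrix (Fin d) (Fin n) ℝ | ∀ v : EuclideanSpace ℝ (Fin n),
        ‖(EuclideanSpace.equiv (Fin d) ℝ).symm (Matrix.mulVec Φ (fun i => v i))‖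
          ≤ ‖v‖ / (2 * Real.sqrt lam)} := by
  ext Φ
  simp only [Set.mem_setOf_eq]
  constructor
  · rintro ⟨X, rfl⟩ v
    set vf : Fin n → ℝ := fun i => v i with hvf
    rw [ridge_norm_eq]
    have hnv : ‖v‖ = Real.sqrt (vf ⬝ᵥ vf) := by
      rw [EuclideanSpace.norm_eq]
      congr 1
      simp [dotProduct, Real.norm_eq_abs, sq_abs, sq, hvf]
    rw [hnv]
    exact ridge_sqrt_le hlam (Finset.sum_nonneg fun i _ => mul_self_nonneg _)
      (ridge_forward hlam X vf)
  · intro h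
    -- reverse direction
    have hM : (Φᵀ * Φ).IsHermitian := by
      have := (Matrix.posSemidef_conjTranspose_mul_self Φ).1
      simpa [conjTranspose_eq_transpose_of_trivial] using this
    set ev := hM.eigenvalues with hev
    set U : Matrix (Fin n) (Fin n) ℝ := (hM.eigenvectorUnitary : Matrix (Fin n) (Fin n) ℝ)
      with hUdef
    have hU1 : star U * U = 1 := Matrix.mem_unitaryGroup_iff'.mp hM.eigenvectorUnitary.2
    have hU2 : U * star U = 1 := Matrix.mem_unitaryGroup_iff.mp hM.eigenvectorUnitary.2
    have happ : ∀ c c' : Fin n → ℝ,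
        (U * diagonal c * star U) * (U * diagonal c' * star U)
          = U * diagonal (fun i => c i * c' i) * star U := by
      intro c c'
      calc (U * diagonal c * star U) * (U * diagonal c' * star U)
          = U * (diagonal c * ((star U * U) * diagonal c')) * star U := by
            simp only [Matrix.mul_assoc]
        _ = U * diagonal (fun i => c i * c' i) * star U := by
            rw [hU1, Matrix.one_mul, diagonal_mul_diagonal, Matrix.mul_assoc]
    have hspec : Φᵀ * Φ = U * diagonal ev * star U := by
      have := hM.spectral_theorem
      simpa [hUdef, hev] using this
    -- eigenvalue bounds
    have hbound : ∀ i, 0 ≤ ev i ∧ 4 * lam * ev i ≤ 1 := by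
      intro i
      set u := hM.eigenvectorBasis i with hu
      have hmul : (Φᵀ * Φ) *ᵥ ⇑u = ev i • ⇑u := hM.mulVec_eigenvectorBasis i
      have hnorm : ‖u‖ = 1 := hM.eigenvectorBasis.orthonormal.1 i
      have huu : (⇑u : Fin n → ℝ) ⬝ᵥ ⇑u = 1 := by
        have h1 : Real.sqrt ((⇑u : Fin n → ℝ) ⬝ᵥ ⇑u) = 1 := by
          rw [← hnorm, EuclideanSpace.norm_eq]
          congr 1
          simp [dotProduct, Real.norm_eq_abs, sq_abs, sq]
        nlinarith [Real.sq_sqrt (show (0:ℝ) ≤ (⇑u : Fin n → ℝ) ⬝ᵥ ⇑u from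
          Finset.sum_nonneg fun j _ => mul_self_nonneg _), h1]
      have e : ev i = (Φ *ᵥ ⇑u) ⬝ᵥ (Φ *ᵥ ⇑u) := by
        have e1 : ((Φᵀ * Φ) *ᵥ ⇑u) ⬝ᵥ ⇑u = (Φ *ᵥ ⇑u) ⬝ᵥ (Φ *ᵥ ⇑u) := by
          rw [← mulVec_mulVec, mulVec_transpose, ← dotProduct_mulVec]
        rw [hmul] at e1
        rw [← e1, smul_dotProduct, huu, smul_eq_mul, mul_one]
      constructor
      · rw [e]; exact Finset.sum_nonneg fun j _ => mul_self_nonneg _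
      · have hb := h u
        rw [show (fun i => u i) = (⇑u : Fin n → ℝ) from rfl, ridge_norm_eq, hnorm] at hb
        have hsq : (Φ *ᵥ ⇑u) ⬝ᵥ (Φ *ᵥ ⇑u) ≤ (1 / (2 * Real.sqrt lam)) ^ 2 := by
          have h0 : 0 ≤ (Φ *ᵥ ⇑u) ⬝ᵥ (Φ *ᵥ ⇑u) :=
            Finset.sum_nonneg fun j _ => mul_self_nonneg _
          calc (Φ *ᵥ ⇑u) ⬝ᵥ (Φ *ᵥ ⇑u)
              = Real.sqrt ((Φ *ᵥ ⇑u) ⬝ᵥ (Φ *ᵥ ⇑u)) ^ 2 := (Real.sq_sqrt h0).symm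
            _ ≤ (1 / (2 * Real.sqrt lam)) ^ 2 := by
                apply pow_le_pow_left₀ (Real.sqrt_nonneg _)
                simpa using hb
        have hc : (1 / (2 * Real.sqrt lam)) ^ 2 = 1 / (4 * lam) := by
          rw [div_pow, one_pow, mul_pow, Real.sq_sqrt hlam.le]; norm_num
        rw [e]
        rw [hc] at hsq
        rw [mul_comm]
        calc ((Φ *ᵥ ⇑u) ⬝ᵥ (Φ *ᵥ ⇑u)) * (4 * lam) ≤ (1 / (4 * lam)) * (4 * lam) := by
              apply mul_le_mul_of_nonneg_right hsq (by positivity)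
          _ = 1 := by field_simp
    -- construct X
    set g : ℝ → ℝ := fun t => 2 * lam / (1 + Real.sqrt (1 - 4 * lam * t)) with hg
    set N : Matrix (Fin n) (Fin n) ℝ := U * diagonal (fun i => g (ev i)) * star U with hN
    set X : Matrix (Fin n) (Fin d) ℝ := N * Φᵀ with hX
    have hstarU : star U = Uᵀ := by
      rw [Matrix.star_eq_conjTranspose, conjTranspose_eq_transpose_of_trivial]
    have hNsymm : Nᵀ = N := by
      rw [hN, Matrix.transpose_mul, Matrix.transpose_mul, diagonal_transpose, hstarU,
        Matrix.transpose_transpose, Matrix.mul_assoc]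
    have hXXT : X * Xᵀ = U * diagonal (fun i => g (ev i) * ev i * g (ev i)) * star U := by
      rw [hX, Matrix.transpose_mul, hNsymm]
      calc N * Φᵀ * (Φ * N) = N * (Φᵀ * Φ) * N := by simp only [Matrix.mul_assoc]
        _ = U * diagonal (fun i => g (ev i) * ev i * g (ev i)) * star U := by
            rw [hspec, hN, happ, happ]
    have hlamI : lam • (1 : Matrix (Fin n) (Fin n) ℝ)
        = U * diagonal (fun _ => lam) * star U := by
      rw [← smul_one_eq_diagonal, mul_smul_comm, Matrix.mul_one, smul_mul_assoc, hU2]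
    have hC : X * Xᵀ + lam • (1 : Matrix (Fin n) (Fin n) ℝ) = N := by
      have hfun : (fun i : Fin n => g (ev i) * ev i * g (ev i) + lam)
          = fun i => g (ev i) := by
        funext i
        calc g (ev i) * ev i * g (ev i) + lam
            = (2 * lam / (1 + Real.sqrt (1 - 4 * lam * ev i))) ^ 2 * ev i + lam := by
              simp only [hg]; ring
          _ = 2 * lam / (1 + Real.sqrt (1 - 4 * lam * ev i)) :=
              ridge_scalar hlam (hbound i).2
          _ = g (ev i) := by simp only [hg]
      rw [hXXT, hlamI, ← Matrix.add_mul, ← Matrix.mul_add, diagonal_add, hfun, hN]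
    refine ⟨X, ?_⟩
    have hCpd := ridge_posdef hlam X
    have hdet := (Matrix.isUnit_iff_isUnit_det _).mp hCpd.isUnit
    have hPhiC : Φ * (X * Xᵀ + lam • (1 : Matrix (Fin n) (Fin n) ℝ)) = Xᵀ := by
      rw [hC, hX, Matrix.transpose_mul, hNsymm, Matrix.transpose_transpose]
    calc Φ = Φ * (X * Xᵀ + lam • (1 : Matrix (Fin n) (Fin n) ℝ))
            * (X * Xᵀ + lam • (1 : Matrix (Fin n) (Fin n) ℝ))⁻¹ := by
          rw [Matrix.mul_assoc, Matrix.mul_nonsing_inv _ hdet, Matrix.mul_one]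
      _ = Xᵀ * (X * Xᵀ + lam • (1 : Matrix (Fin n) (Fin n) ℝ))⁻¹ := by rw [hPhiC]
end

section
/- Fix λ > 0, integers d ≥ 1, C ≥ 1, n_s ≥ C, n_t ≥ 1, and a target dataset X_t ∈ ℝ^{n_t×d}, y_t ∈ ℝ^{n_t×C}. Then the infimum over all support sets (X_s, y_s) ∈ ℝ^{n_s×d} × ℝ^{n_s×C} of the KIP loss with linear kernel, (1/2)‖y_t − X_t Xₛᵀ(X_sX_sᵀ + λI)⁻¹ y_s‖²_F, equals the minimum over w ∈ ℝ^{d×C} of the least-squares loss (1/2)‖y_t − X_t w‖²_F; moreover this infimum is attained by some (X_s, y_s), and for any minimizing (X_s, y_s) the matrix w = Xₛᵀ(X_sX_sᵀ + λI)⁻¹ y_s is a least-squares classifier for (X_t, y_t), i.e. a minimizer of w ↦ ‖y_t − X_t w‖²_F. -/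
open Matrix

/-- The squared Frobenius norm of a real matrix. -/
noncomputable def froSq {m n : Type*} [Fintype m] [Fintype n]
    (M : Matrix m n ℝ) : ℝ :=
  ∑ i, ∑ j, (M i j) ^ 2

section Aux

open Matrix

/-- The ridge regularized kernel matrix is positive definite, hence has unit determinant. -/
lemma kip_aux_isUnit_det {ns d : ℕ} (lam : ℝ) (hlam : 0 < lam)
    (Xs : Matrix (Fin ns) (Fin d) ℝ) :
    IsUnit (Xs * Xsᵀ + lam • (1 : Matrix (Fin ns) (Fin ns) ℝ)).det := by
  have h1 : (Xs * Xsᵀ : Matrix (Fin ns) (Fin ns) ℝ).PosSemidef := by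
    have := Matrix.posSemidef_self_mul_conjTranspose Xs
    simpa using this
  have h2 : (lam • (1 : Matrix (Fin ns) (Fin ns) ℝ)).PosDef := by
    have : (lam • (1 : Matrix (Fin ns) (Fin ns) ℝ)) =
        Matrix.diagonal (fun _ => lam) := by
      ext i j
      by_cases h : i = j <;> simp [Matrix.one_apply, Matrix.diagonal, h]
    rw [this]
    exact Matrix.posDef_diagonal_iff.mpr fun _ => hlam
  exact (Matrix.PosDef.posSemidef_add h1 h2).det_pos.ne'.isUnit

/-- Any `w` can be realized as the ridge coefficients of some support set. -/
lemma kip_aux_realize {d C ns : ℕ} (hns : C ≤ ns) (lam : ℝ) (hlam : 0 < lam)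
    (w : Matrix (Fin d) (Fin C) ℝ) :
    ∃ (Xs : Matrix (Fin ns) (Fin d) ℝ) (ys : Matrix (Fin ns) (Fin C) ℝ),
      Xsᵀ * (Xs * Xsᵀ + lam • (1 : Matrix (Fin ns) (Fin ns) ℝ))⁻¹ * ys = w := by
  set Xs : Matrix (Fin ns) (Fin d) ℝ :=
    Matrix.of (fun i j => if h : (i : ℕ) < C then w j ⟨i, h⟩ else 0) with hXs
  set M : Matrix (Fin ns) (Fin ns) ℝ :=
    Xs * Xsᵀ + lam • (1 : Matrix (Fin ns) (Fin ns) ℝ) with hM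
  set U : Matrix (Fin ns) (Fin C) ℝ :=
    Matrix.of (fun i k => if i = Fin.castLE hns k then (1 : ℝ) else 0) with hU
  refine ⟨Xs, M * U, ?_⟩
  have hdet : IsUnit M.det := kip_aux_isUnit_det lam hlam Xs
  have hcancel : Xsᵀ * M⁻¹ * (M * U) = Xsᵀ * U := by
    rw [Matrix.mul_assoc, ← Matrix.mul_assoc M⁻¹ M U,
      Matrix.nonsing_inv_mul M hdet, Matrix.one_mul]
  rw [hcancel]
  ext j k
  have : (Xsᵀ * U) j k = ∑ i, Xs i j * (if i = Fin.castLE hns k then (1 : ℝ) else 0) := by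
    simp [Matrix.mul_apply, hU, Matrix.transpose_apply]
  rw [this]
  rw [Finset.sum_eq_single (Fin.castLE hns k)]
  · have hk : ((Fin.castLE hns k : Fin ns) : ℕ) < C := by
      simpa using k.isLt
    simp [hXs, hk]
  · intro i _ hi
    simp [hi]
  · intro h
    exact absurd (Finset.mem_univ _) h

/-- Existence of a least-squares minimizer, via orthogonal projection. -/
lemma kip_aux_lsq_min {d C nt : ℕ}
    (Xt : Matrix (Fin nt) (Fin d) ℝ) (yt : Matrix (Fin nt) (Fin C) ℝ) :
    ∃ w₀ : Matrix (Fin d) (Fin C) ℝ, ∀ w : Matrix (Fin d) (Fin C) ℝ, froSq (yt - Xt * w₀) ≤ froSq (yt - Xt * w) := by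
  classical
  let toE : Matrix (Fin nt) (Fin C) ℝ → EuclideanSpace ℝ (Fin nt × Fin C) := fun M =>
    (WithLp.equiv 2 ((Fin nt × Fin C) → ℝ)).symm (fun p => M p.1 p.2)
  let g : Matrix (Fin d) (Fin C) ℝ →ₗ[ℝ] EuclideanSpace ℝ (Fin nt × Fin C) :=
    { toFun := fun w => toE (Xt * w)
      map_add' := by
        intro a b
        apply (WithLp.equiv 2 ((Fin nt × Fin C) → ℝ)).injective
        funext p
        simp [toE, Matrix.mul_add]
      map_smul' := by
        intro c a
        apply (WithLp.equiv 2 ((Fin nt × Fin C) → ℝ)).injective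
        funext p
        simp [toE, Matrix.mul_smul] }
  let y : EuclideanSpace ℝ (Fin nt × Fin C) := toE yt
  -- squared Frobenius norm equals squared Euclidean norm
  have hfro : ∀ M : Matrix (Fin nt) (Fin C) ℝ,
      froSq M = ‖toE M‖ ^ 2 := by
    intro M
    rw [EuclideanSpace.norm_eq, Real.sq_sqrt (by positivity), Fintype.sum_prod_type, froSq]
    refine Finset.sum_congr rfl fun i _ => Finset.sum_congr rfl fun j _ => ?_
    simp [toE, Real.norm_eq_abs, sq_abs]
  set K := LinearMap.range g with hK
  haveI : FiniteDimensional ℝ K := inferInstance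
  obtain ⟨w₀, hw₀⟩ := (K.orthogonalProjectionOnto y).2
  refine ⟨w₀, fun w => ?_⟩
  have hnorm : ‖y - g w₀‖ ≤ ‖y - g w‖ := by
    rw [hw₀]
    rw [Submodule.coe_orthogonalProjectionOnto_apply, Submodule.starProjection_minimal]
    refine ciInf_le ⟨0, ?_⟩ (⟨g w, LinearMap.mem_range_self g w⟩ : K)
    rintro r ⟨x, rfl⟩
    positivity
  have hrewrite : ∀ u : Matrix (Fin d) (Fin C) ℝ,
      toE (yt - Xt * u) = y - g u := by
    intro u
    apply (WithLp.equiv 2 ((Fin nt × Fin C) → ℝ)).injective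
    funext p
    simp [toE, y, g, Matrix.sub_apply]
  rw [hfro (yt - Xt * w₀), hfro (yt - Xt * w), hrewrite, hrewrite]
  exact pow_le_pow_left₀ (norm_nonneg _) hnorm 2

end Aux

/-- For a linear kernel, the infimum of the KIP loss over support sets
`(X_s, y_s)` with `n_s ≥ C` is attained and equals the minimum of the least-squares loss
`w ↦ (1/2)‖y_t − X_t w‖²_F`; moreover, for any minimizing support set, the induced ridge
coefficients `Φ_λ(X_s) y_s` form a least-squares classifier for `(X_t, y_t)`. -/
theorem kip_linear_kernel_infimum_least_squares
    (d C ns nt : ℕ) (hd : 1 ≤ d) (hC : 1 ≤ C) (hns : C ≤ ns) (hnt : 1 ≤ nt)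
    (lam : ℝ) (hlam : 0 < lam)
    (Xt : Matrix (Fin nt) (Fin d) ℝ) (yt : Matrix (Fin nt) (Fin C) ℝ)
    (L : Matrix (Fin ns) (Fin d) ℝ → Matrix (Fin ns) (Fin C) ℝ → ℝ)
    (hL : ∀ Xs ys, L Xs ys = (1 / 2) * froSq
      (yt - Xt * (Xsᵀ * (Xs * Xsᵀ + lam • (1 : Matrix (Fin ns) (Fin ns) ℝ))⁻¹ * ys)))
    (lsq : Matrix (Fin d) (Fin C) ℝ → ℝ)
    (hlsq : ∀ w, lsq w = (1 / 2) * froSq (yt - Xt * w)) :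
    (∃ Xs ys, ∀ Xs' ys', L Xs ys ≤ L Xs' ys') ∧
    (∃ r : ℝ, IsLeast {r : ℝ | ∃ Xs ys, L Xs ys = r} r ∧
      IsLeast {r : ℝ | ∃ w, lsq w = r} r) ∧
    (∀ Xs ys, (∀ Xs' ys', L Xs ys ≤ L Xs' ys') →
      ∀ w : Matrix (Fin d) (Fin C) ℝ,
        froSq (yt - Xt * (Xsᵀ * (Xs * Xsᵀ + lam • (1 : Matrix (Fin ns) (Fin ns) ℝ))⁻¹ * ys))
          ≤ froSq (yt - Xt * w)) := by
  obtain ⟨w₀, hw₀⟩ := kip_aux_lsq_min Xt yt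
  obtain ⟨Xs₀, ys₀, hXs₀⟩ := kip_aux_realize hns lam hlam w₀
  -- L of any support set equals lsq of its induced coefficients
  have hLlsq : ∀ Xs ys, L Xs ys =
      lsq (Xsᵀ * (Xs * Xsᵀ + lam • (1 : Matrix (Fin ns) (Fin ns) ℝ))⁻¹ * ys) := by
    intro Xs ys
    rw [hL, hlsq]
  have hL₀ : L Xs₀ ys₀ = lsq w₀ := by rw [hLlsq, hXs₀]
  have hlsq_min : ∀ w, lsq w₀ ≤ lsq w := by
    intro w
    rw [hlsq, hlsq]
    have := hw₀ w
    linarith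
  have hmin : ∀ Xs' ys', L Xs₀ ys₀ ≤ L Xs' ys' := by
    intro Xs' ys'
    rw [hL₀, hLlsq]
    exact hlsq_min _
  refine ⟨⟨Xs₀, ys₀, hmin⟩, ⟨L Xs₀ ys₀, ⟨⟨Xs₀, ys₀, rfl⟩, ?_⟩, ⟨⟨w₀, hL₀.symm⟩, ?_⟩⟩, ?_⟩
  · rintro r ⟨Xs, ys, rfl⟩
    exact hmin Xs ys
  · rintro r ⟨w, rfl⟩
    rw [hL₀]
    exact hlsq_min w
  · intro Xs ys hminXs w
    have h1 : L Xs ys ≤ L Xs₀ ys₀ := hminXs Xs₀ ys₀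
    have h2 : L Xs₀ ys₀ ≤ lsq w := hL₀ ▸ hlsq_min w
    have h3 : L Xs ys ≤ lsq w := le_trans h1 h2
    rw [hL, hlsq] at h3
    linarith
end

section
/- Let d, C, n_s, n_t ≥ 1 with X_t ∈ ℝ^{n_t×d} of rank d and X_s ∈ ℝ^{n_s×d} of rank d (so X_tᵀX_t and X_sᵀX_s are invertible), and let y_t ∈ ℝ^{n_t×C}. Set w₀ = (X_tᵀX_t)⁻¹X_tᵀ y_t (the unique least-squares classifier for (X_t, y_t)) and define the label-solve map L(y) = (1/2)‖y_t − X_t(X_sᵀX_s)⁻¹X_sᵀ y‖²_F for y ∈ ℝ^{n_s×C}. Then y* := X_s w₀ is a minimizer of L, and every minimizer y ≠ y* of L satisfies ‖y‖_F > ‖y*‖_F; that is, y* is the unique minimum-norm minimizer, and it coincides with the predictions of the least-squares classifier of (X_t, y_t) evaluated on the support points X_s. -/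
open Matrix

/-- The Frobenius norm of a real matrix. -/
noncomputable def froNorm {m n : Type*} [Fintype m] [Fintype n]
    (M : Matrix m n ℝ) : ℝ :=
  Real.sqrt (froSq M)

lemma froSq_nonneg {m n : Type*} [Fintype m] [Fintype n] (M : Matrix m n ℝ) :
    0 ≤ froSq M :=
  Finset.sum_nonneg fun _ _ => Finset.sum_nonneg fun _ _ => sq_nonneg _

lemma froSq_eq_zero_iff {m n : Type*} [Fintype m] [Fintype n] (M : Matrix m n ℝ) :
    froSq M = 0 ↔ M = 0 := by
  constructor
  · intro h
    ext i j
    have h1 : ∀ i ∈ Finset.univ, (0:ℝ) ≤ ∑ j, (M i j)^2 :=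
      fun _ _ => Finset.sum_nonneg fun _ _ => sq_nonneg _
    have := (Finset.sum_eq_zero_iff_of_nonneg h1).mp h i (Finset.mem_univ i)
    have := (Finset.sum_eq_zero_iff_of_nonneg (fun _ _ => sq_nonneg _)).mp this j (Finset.mem_univ j)
    simpa using pow_eq_zero_iff (n := 2) (by norm_num) |>.mp this
  · intro h; simp [h, froSq]

lemma cross_sum_eq_zero {m n : Type*} [Fintype m] [Fintype n]
    (A B : Matrix m n ℝ) (h : Aᵀ * B = 0) :
    ∑ i, ∑ j, A i j * B i j = 0 := by
  rw [Finset.sum_comm]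
  have hj : ∀ j, ∑ i, A i j * B i j = (Aᵀ * B) j j := by
    intro j; simp [Matrix.mul_apply, Matrix.transpose_apply]
  simp [hj, h]

lemma froSq_add_of_orth {m n : Type*} [Fintype m] [Fintype n]
    (A B : Matrix m n ℝ) (h : Aᵀ * B = 0) :
    froSq (A + B) = froSq A + froSq B := by
  unfold froSq
  have he : ∀ i j, (A i j + B i j)^2 = A i j ^2 + B i j ^2 + 2*(A i j * B i j) := by
    intro i j; ring
  simp_rw [Matrix.add_apply, he, Finset.sum_add_distrib, ← Finset.mul_sum]
  rw [cross_sum_eq_zero A B h]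
  ring

lemma isUnit_of_rank_eq_card {d : ℕ} (M : Matrix (Fin d) (Fin d) ℝ) (h : M.rank = d) :
    IsUnit M := by
  rw [← Matrix.mulVec_injective_iff_isUnit]
  have hrn := LinearMap.finrank_range_add_finrank_ker M.mulVecLin
  rw [show Module.finrank ℝ (LinearMap.range M.mulVecLin) = M.rank from rfl, h] at hrn
  simp [Module.finrank_fintype_fun_eq_card] at hrn
  have := LinearMap.ker_eq_bot.mp hrn
  exact this

/-- For full-column-rank `X_t` and `X_s`, with `w₀ = (X_tᵀX_t)⁻¹X_tᵀy_t` the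
least-squares classifier of the target data, the labels `y* = X_s w₀` minimize the label-solve
loss `L(y) = (1/2)‖y_t − X_t(X_sᵀX_s)⁻¹X_sᵀ y‖²_F`, and every other minimizer has strictly
larger Frobenius norm: `y*` is the unique minimum-norm minimizer. -/
theorem label_solve_full_rank_minimum_norm_solution
    (d C ns nt : ℕ) (hd : 1 ≤ d) (hC : 1 ≤ C)
    (Xt : Matrix (Fin nt) (Fin d) ℝ) (Xs : Matrix (Fin ns) (Fin d) ℝ)
    (yt : Matrix (Fin nt) (Fin C) ℝ)
    (hXt : Xt.rank = d) (hXs : Xs.rank = d)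
    (w0 : Matrix (Fin d) (Fin C) ℝ) (hw0 : w0 = (Xtᵀ * Xt)⁻¹ * Xtᵀ * yt)
    (L : Matrix (Fin ns) (Fin C) ℝ → ℝ)
    (hL : ∀ y, L y = (1 / 2) * froSq (yt - Xt * ((Xsᵀ * Xs)⁻¹ * Xsᵀ * y))) :
    (∀ y, L (Xs * w0) ≤ L y) ∧
    (∀ y, (∀ y', L y ≤ L y') → y ≠ Xs * w0 → froNorm (Xs * w0) < froNorm y) := by
  -- invertibility of the Gram matrices
  have hXsU : IsUnit (Xsᵀ * Xs) :=
    isUnit_of_rank_eq_card _ (by rw [Matrix.rank_transpose_mul_self, hXs])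
  have hXtU : IsUnit (Xtᵀ * Xt) :=
    isUnit_of_rank_eq_card _ (by rw [Matrix.rank_transpose_mul_self, hXt])
  have hXsDet : IsUnit (Xsᵀ * Xs).det := (Matrix.isUnit_iff_isUnit_det _).mp hXsU
  have hXtDet : IsUnit (Xtᵀ * Xt).det := (Matrix.isUnit_iff_isUnit_det _).mp hXtU
  -- the pseudoinverse applied to `Xs * w` returns `w`
  have hP : ∀ w : Matrix (Fin d) (Fin C) ℝ, (Xsᵀ * Xs)⁻¹ * Xsᵀ * (Xs * w) = w := by
    intro w
    rw [Matrix.mul_assoc ((Xsᵀ * Xs)⁻¹) Xsᵀ (Xs * w), ← Matrix.mul_assoc Xsᵀ Xs w]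
    exact Matrix.nonsing_inv_mul_cancel_left _ _ hXsDet
  -- normal equations: the residual at `w0` is orthogonal to the column space of Xt
  have hNE : Xtᵀ * (yt - Xt * w0) = 0 := by
    rw [hw0, Matrix.mul_sub]
    have h : Xtᵀ * (Xt * ((Xtᵀ * Xt)⁻¹ * Xtᵀ * yt)) = Xtᵀ * yt := by
      rw [← Matrix.mul_assoc Xtᵀ Xt, Matrix.mul_assoc ((Xtᵀ * Xt)⁻¹) Xtᵀ yt]
      exact Matrix.mul_nonsing_inv_cancel_left _ _ hXtDet
    rw [h, sub_self]
  -- key decomposition of the residual norm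
  have key : ∀ w : Matrix (Fin d) (Fin C) ℝ,
      froSq (yt - Xt * w) = froSq (yt - Xt * w0) + froSq (Xt * (w0 - w)) := by
    intro w
    have hdecomp : yt - Xt * w = (yt - Xt * w0) + Xt * (w0 - w) := by
      rw [Matrix.mul_sub]; abel
    rw [hdecomp]
    apply froSq_add_of_orth
    have : (yt - Xt * w0)ᵀ * (Xt * (w0 - w)) = ((Xtᵀ * (yt - Xt * w0))ᵀ) * (w0 - w) := by
      rw [Matrix.transpose_mul, Matrix.transpose_transpose, Matrix.mul_assoc]
    rw [this, hNE, Matrix.transpose_zero, Matrix.zero_mul]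
  constructor
  · -- minimality
    intro y
    rw [hL, hL, hP w0, key ((Xsᵀ * Xs)⁻¹ * Xsᵀ * y)]
    have := froSq_nonneg (Xt * (w0 - (Xsᵀ * Xs)⁻¹ * Xsᵀ * y))
    linarith
  · -- minimum-norm uniqueness
    intro y hmin hne
    -- from minimality, the projected coefficients equal w0
    have h1 : L y ≤ L (Xs * w0) := hmin (Xs * w0)
    have h2 : froSq (Xt * (w0 - (Xsᵀ * Xs)⁻¹ * Xsᵀ * y)) = 0 := by
      rw [hL, hL, hP w0, key ((Xsᵀ * Xs)⁻¹ * Xsᵀ * y)] at h1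
      have := froSq_nonneg (Xt * (w0 - (Xsᵀ * Xs)⁻¹ * Xsᵀ * y))
      linarith
    have h3 : Xt * (w0 - (Xsᵀ * Xs)⁻¹ * Xsᵀ * y) = 0 := (froSq_eq_zero_iff _).mp h2
    have h4 : w0 - (Xsᵀ * Xs)⁻¹ * Xsᵀ * y = 0 := by
      have h5 : Xtᵀ * Xt * (w0 - (Xsᵀ * Xs)⁻¹ * Xsᵀ * y) = 0 := by
        rw [Matrix.mul_assoc, h3, Matrix.mul_zero]
      have := congrArg (fun M => (Xtᵀ * Xt)⁻¹ * M) h5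
      simpa [Matrix.nonsing_inv_mul_cancel_left _ _ hXtDet] using this
    have hPy : (Xsᵀ * Xs)⁻¹ * Xsᵀ * y = w0 := by
      have := sub_eq_zero.mp h4; exact this.symm
    -- orthogonal decomposition of y
    have hdecomp : y = Xs * w0 + (y - Xs * w0) := by abel
    have horth : (Xs * w0)ᵀ * (y - Xs * w0) = 0 := by
      have hXsy : Xsᵀ * (Xs * ((Xsᵀ * Xs)⁻¹ * Xsᵀ * y)) = Xsᵀ * y := by
        rw [← Matrix.mul_assoc Xsᵀ Xs, Matrix.mul_assoc ((Xsᵀ * Xs)⁻¹) Xsᵀ y]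
        exact Matrix.mul_nonsing_inv_cancel_left _ _ hXsDet
      rw [hPy] at hXsy
      rw [Matrix.transpose_mul, Matrix.mul_sub, Matrix.mul_assoc, Matrix.mul_assoc, hXsy,
        sub_self]
    have hsum : froSq y = froSq (Xs * w0) + froSq (y - Xs * w0) := by
      conv_lhs => rw [hdecomp]
      exact froSq_add_of_orth _ _ horth
    have hpos : 0 < froSq (y - Xs * w0) := by
      rcases lt_or_eq_of_le (froSq_nonneg (y - Xs * w0)) with h | h
      · exact h
      · exact absurd (sub_eq_zero.mp ((froSq_eq_zero_iff _).mp h.symm)) hne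
    have : froSq (Xs * w0) < froSq y := by linarith
    exact Real.sqrt_lt_sqrt (froSq_nonneg _) this
end

section
/- Let K : ℝ^d × ℝ^d → ℝ be a symmetric positive semidefinite kernel, λ > 0, and fix a target dataset X_t ∈ ℝ^{n_t×d}, y_t ∈ ℝ^{n_t×C}, and a support size n_s ≥ 1. Let 𝒮 be the family of subspaces of ℝ^{n_t} of the form {column space of K_{X_tX_s} : X_s ∈ ℝ^{n_s×d}}. Then the infimum over all (X_s, y_s) ∈ ℝ^{n_s×d} × ℝ^{n_s×C} of the loss (1/2)‖y_t − K_{X_tX_s}(K_{X_sX_s} + λI)⁻¹ y_s‖²_F equals inf_{S ∈ 𝒮} (1/2)‖Π⊥_S y_t‖²_F, where Π⊥_S is the orthogonal projection of ℝ^{n_t} onto the orthogonal complement of S, applied to each of the C columns of y_t. -/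
open Matrix

lemma froSq_eq_sum_cols {nt C : ℕ} (M : Matrix (Fin nt) (Fin C) ℝ) :
    froSq M = ∑ c : Fin C,
      ‖((EuclideanSpace.equiv (Fin nt) ℝ).symm (fun i => M i c) :
        EuclideanSpace ℝ (Fin nt))‖ ^ 2 := by
  rw [froSq, Finset.sum_comm]
  refine Finset.sum_congr rfl fun c _ => ?_
  rw [EuclideanSpace.norm_eq, Real.sq_sqrt (by positivity)]
  simp [Real.norm_eq_abs, sq_abs]

lemma col_eq {ns nt C : ℕ} (A : Matrix (Fin nt) (Fin ns) ℝ) (yt : Matrix (Fin nt) (Fin C) ℝ)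
    (B : Matrix (Fin ns) (Fin C) ℝ) (c : Fin C) :
    ((EuclideanSpace.equiv (Fin nt) ℝ).symm (fun i => (yt - A * B) i c) :
        EuclideanSpace ℝ (Fin nt))
      = (EuclideanSpace.equiv (Fin nt) ℝ).symm (fun i => yt i c)
        - Matrix.toEuclideanLin A
            ((EuclideanSpace.equiv (Fin ns) ℝ).symm (fun j => B j c)) := by
  ext i
  simp [Matrix.toEuclideanLin_apply, Matrix.mulVec, Matrix.mul_apply, dotProduct,
    EuclideanSpace.equiv, Matrix.sub_apply]

lemma proj_sq_le {nt : ℕ} (S : Submodule ℝ (EuclideanSpace ℝ (Fin nt)))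
    (v w : EuclideanSpace ℝ (Fin nt)) (hw : w ∈ S) :
    ‖(Submodule.orthogonalProjectionOnto Sᗮ v : EuclideanSpace ℝ (Fin nt))‖ ^ 2 ≤ ‖v - w‖ ^ 2 := by
  have h0 : Submodule.orthogonalProjectionOnto Sᗮ w = 0 :=
    Submodule.orthogonalProjectionOnto_apply_of_mem_orthogonal
      (S.le_orthogonal_orthogonal hw)
  have h1 : (Submodule.orthogonalProjectionOnto Sᗮ v : EuclideanSpace ℝ (Fin nt))
      = Submodule.orthogonalProjectionOnto Sᗮ (v - w) := by
    rw [map_sub, h0, sub_zero]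
  rw [h1]
  have := Submodule.norm_sq_eq_add_norm_sq_projection (v - w) S
  have h2 : (0:ℝ) ≤ ‖Submodule.orthogonalProjectionOnto S (v - w)‖ ^ 2 := sq_nonneg _
  simp only [Submodule.coe_norm] at *
  linarith

/-- Key lemma: for a fixed support input matrix, the loss over `ys` is bounded below by the
projection expression, and the bound is attained. -/
lemma kip_inner {ns nt C : ℕ}
    (A : Matrix (Fin nt) (Fin ns) ℝ) (M : Matrix (Fin ns) (Fin ns) ℝ)
    (hM : IsUnit M.det)
    (S : Submodule ℝ (EuclideanSpace ℝ (Fin nt)))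
    (hS : S = LinearMap.range (Matrix.toEuclideanLin A))
    (yt : Matrix (Fin nt) (Fin C) ℝ) :
    (∀ ys : Matrix (Fin ns) (Fin C) ℝ,
      ∑ c : Fin C, ‖(Submodule.orthogonalProjectionOnto Sᗮ
          ((EuclideanSpace.equiv (Fin nt) ℝ).symm (fun i => yt i c)) :
          EuclideanSpace ℝ (Fin nt))‖ ^ 2
        ≤ froSq (yt - A * M⁻¹ * ys)) ∧
    (∃ ys : Matrix (Fin ns) (Fin C) ℝ,
      froSq (yt - A * M⁻¹ * ys) =
      ∑ c : Fin C, ‖(Submodule.orthogonalProjectionOnto Sᗮ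
          ((EuclideanSpace.equiv (Fin nt) ℝ).symm (fun i => yt i c)) :
          EuclideanSpace ℝ (Fin nt))‖ ^ 2) := by
  subst hS
  set g : Fin C → EuclideanSpace ℝ (Fin nt) :=
    fun c => (EuclideanSpace.equiv (Fin nt) ℝ).symm (fun i => yt i c) with hg
  constructor
  · intro ys
    rw [froSq_eq_sum_cols, Matrix.mul_assoc]
    refine Finset.sum_le_sum fun c _ => ?_
    rw [col_eq]
    exact proj_sq_le _ (g c) _ ⟨_, rfl⟩
  · -- attainment
    have hex : ∀ c : Fin C, ∃ z : EuclideanSpace ℝ (Fin ns),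
        Matrix.toEuclideanLin A z = (Submodule.orthogonalProjectionOnto (LinearMap.range (Matrix.toEuclideanLin A)) (g c) : EuclideanSpace ℝ (Fin nt)) := by
      intro c
      exact (Submodule.orthogonalProjectionOnto (LinearMap.range (Matrix.toEuclideanLin A)) (g c)).2
    choose z hz using hex
    set B : Matrix (Fin ns) (Fin C) ℝ := Matrix.of fun j c => z c j with hB
    refine ⟨M * B, ?_⟩
    have hMB : M⁻¹ * (M * B) = B := by
      rw [← Matrix.mul_assoc, Matrix.nonsing_inv_mul M hM, Matrix.one_mul]
    rw [Matrix.mul_assoc, hMB, froSq_eq_sum_cols]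
    refine Finset.sum_congr rfl fun c _ => ?_
    rw [col_eq]
    have hzc : (EuclideanSpace.equiv (Fin ns) ℝ).symm (fun j => B j c) = z c := rfl
    rw [hzc, hz c]
    exact congrArg (fun x => ‖x‖ ^ 2) (Submodule.starProjection_orthogonal_val (g c)).symm

/-- For a symmetric positive semidefinite kernel `K`, the infimum of the KIP
loss over all support sets `(X_s, y_s)` equals the infimum, over subspaces `S` of `ℝ^{n_t}`
arising as column spaces of target-support kernel matrices `K_{X_tX_s}`, of
`(1/2)‖Π⊥_S y_t‖²_F` (orthogonal projection onto `Sᗮ`, applied columnwise). -/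
theorem kip_optimal_loss_eq_inf_orthogonal_projection
    (d C ns nt : ℕ) (hns : 1 ≤ ns)
    (K : (Fin d → ℝ) → (Fin d → ℝ) → ℝ)
    (hK : ∀ (m : ℕ) (x : Fin m → Fin d → ℝ),
      (Matrix.of fun i j => K (x i) (x j) : Matrix (Fin m) (Fin m) ℝ).PosSemidef)
    (lam : ℝ) (hlam : 0 < lam)
    (Xt : Matrix (Fin nt) (Fin d) ℝ) (yt : Matrix (Fin nt) (Fin C) ℝ)
    (Kts : Matrix (Fin ns) (Fin d) ℝ → Matrix (Fin nt) (Fin ns) ℝ)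
    (hKts : ∀ Xs, Kts Xs = Matrix.of fun i j => K (Xt i) (Xs j))
    (Kss : Matrix (Fin ns) (Fin d) ℝ → Matrix (Fin ns) (Fin ns) ℝ)
    (hKss : ∀ Xs, Kss Xs = Matrix.of fun i j => K (Xs i) (Xs j))
    (S : Matrix (Fin ns) (Fin d) ℝ → Submodule ℝ (EuclideanSpace ℝ (Fin nt)))
    (hS : ∀ Xs, S Xs = LinearMap.range (Matrix.toEuclideanLin (Kts Xs))) :
    sInf {r : ℝ | ∃ (Xs : Matrix (Fin ns) (Fin d) ℝ) (ys : Matrix (Fin ns) (Fin C) ℝ),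
        (1 / 2) * froSq
          (yt - Kts Xs * (Kss Xs + lam • (1 : Matrix (Fin ns) (Fin ns) ℝ))⁻¹ * ys) = r} =
    sInf {r : ℝ | ∃ Xs : Matrix (Fin ns) (Fin d) ℝ,
        (1 / 2) * ∑ c : Fin C,
          ‖(Submodule.orthogonalProjectionOnto (S Xs)ᗮ
              ((EuclideanSpace.equiv (Fin nt) ℝ).symm (fun i => yt i c)) :
            EuclideanSpace ℝ (Fin nt))‖ ^ 2 = r} := by
  have key : ∀ Xs : Matrix (Fin ns) (Fin d) ℝ,
      (∀ ys : Matrix (Fin ns) (Fin C) ℝ,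
        ∑ c : Fin C, ‖(Submodule.orthogonalProjectionOnto (S Xs)ᗮ
            ((EuclideanSpace.equiv (Fin nt) ℝ).symm (fun i => yt i c)) :
            EuclideanSpace ℝ (Fin nt))‖ ^ 2
          ≤ froSq (yt - Kts Xs * (Kss Xs + lam • (1 : Matrix (Fin ns) (Fin ns) ℝ))⁻¹ * ys)) ∧
      (∃ ys : Matrix (Fin ns) (Fin C) ℝ,
        froSq (yt - Kts Xs * (Kss Xs + lam • (1 : Matrix (Fin ns) (Fin ns) ℝ))⁻¹ * ys) =
        ∑ c : Fin C, ‖(Submodule.orthogonalProjectionOnto (S Xs)ᗮ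
            ((EuclideanSpace.equiv (Fin nt) ℝ).symm (fun i => yt i c)) :
            EuclideanSpace ℝ (Fin nt))‖ ^ 2) := by
    intro Xs
    have hpd : (Kss Xs + lam • (1 : Matrix (Fin ns) (Fin ns) ℝ)).PosDef := by
      have h1 : (lam • (1 : Matrix (Fin ns) (Fin ns) ℝ)).PosDef := by
        rw [Matrix.smul_one_eq_diagonal]
        exact Matrix.PosDef.diagonal (fun _ => hlam)
      exact Matrix.PosDef.posSemidef_add (by rw [hKss]; exact hK ns Xs) h1
    exact kip_inner (Kts Xs) _ hpd.det_pos.ne'.isUnit (S Xs) (hS Xs) yt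
  have bddL : BddBelow {r : ℝ | ∃ (Xs : Matrix (Fin ns) (Fin d) ℝ)
      (ys : Matrix (Fin ns) (Fin C) ℝ),
      (1 / 2) * froSq
        (yt - Kts Xs * (Kss Xs + lam • (1 : Matrix (Fin ns) (Fin ns) ℝ))⁻¹ * ys) = r} := by
    refine ⟨0, ?_⟩
    rintro r ⟨Xs, ys, rfl⟩
    have := froSq_nonneg (yt - Kts Xs * (Kss Xs + lam • (1 : Matrix (Fin ns) (Fin ns) ℝ))⁻¹ * ys)
    linarith
  have bddR : BddBelow {r : ℝ | ∃ Xs : Matrix (Fin ns) (Fin d) ℝ,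
      (1 / 2) * ∑ c : Fin C,
        ‖(Submodule.orthogonalProjectionOnto (S Xs)ᗮ
            ((EuclideanSpace.equiv (Fin nt) ℝ).symm (fun i => yt i c)) :
          EuclideanSpace ℝ (Fin nt))‖ ^ 2 = r} := by
    refine ⟨0, ?_⟩
    rintro r ⟨Xs, rfl⟩
    have : (0:ℝ) ≤ ∑ c : Fin C, ‖(Submodule.orthogonalProjectionOnto (S Xs)ᗮ
        ((EuclideanSpace.equiv (Fin nt) ℝ).symm (fun i => yt i c)) :
        EuclideanSpace ℝ (Fin nt))‖ ^ 2 := by positivity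
    linarith
  apply le_antisymm
  · refine le_csInf ⟨_, ⟨0, rfl⟩⟩ ?_
    rintro r ⟨Xs, rfl⟩
    obtain ⟨-, ys, hys⟩ := key Xs
    exact csInf_le bddL ⟨Xs, ys, by rw [hys]⟩
  · refine le_csInf ⟨_, ⟨0, 0, rfl⟩⟩ ?_
    rintro r ⟨Xs, ys, rfl⟩
    refine le_trans (csInf_le bddR ⟨Xs, rfl⟩) ?_
    have := (key Xs).1 ys
    linarith
end
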